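/- Suppose π₀ : ω → ω satisfies: for all n, π₀(n) ∈ H_n, where H_n is a pseudointersection of {S_{n,α} : α ∈ I} (i.e., H_n \ S_{n,α} is finite for all α), S_{n,α} = b_α when n ∈ a_α and S_{n,α} = ω \ b_α when n ∉ a_α, and π₀ eventually dominates each function h_α(n) = min{m : H_n \ {0,…,m−1} ⊆ S_{n,α}}. Then for every α ∈ I: π₀(a_α) ⊆ b_α modulo finite sets and π₀(ω \ a_α) ⊆ ω \ b_α modulo finite sets. -/
import Mathlib


open Set Filter

/- STATEMENT 18: the verification step of Lemma 1: if `π₀ n ∈ Hₙ` where `Hₙ` is a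
pseudointersection of `{S_{n,α}}`, and `π₀` eventually dominates each
`h_α n = min {m : Hₙ \ {0,…,m−1} ⊆ S_{n,α}}`, then `π₀ '' a_α ⊆* b_α` and
`π₀ '' (a_α)ᶜ ⊆* (b_α)ᶜ` for every `α`. -/
open Classical in
theorem stmt_18 {I : Type*} (a b : I → Set ℕ) (H : ℕ → Set ℕ)
    (S : ℕ → I → Set ℕ)
    (hS : ∀ n α, S n α = if n ∈ a α then b α else (b α)ᶜ)
    (hpseudo : ∀ n α, (H n \ S n α).Finite)
    (π₀ : ℕ → ℕ) (hmem : ∀ n, π₀ n ∈ H n)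
    (hdom : ∀ α : I, ∀ᶠ n in atTop,
      sInf {m : ℕ | H n \ Set.Iio m ⊆ S n α} ≤ π₀ n) :
    ∀ α : I, (π₀ '' a α \ b α).Finite ∧ (π₀ '' (a α)ᶜ \ (b α)ᶜ).Finite := by
  intro α
  have key : ∀ᶠ n in atTop, π₀ n ∈ S n α := by
    filter_upwards [hdom α] with n hn
    have hne : {m : ℕ | H n \ Set.Iio m ⊆ S n α}.Nonempty := by
      obtain ⟨m, hm⟩ := (hpseudo n α).bddAbove
      refine ⟨m + 1, fun x hx => ?_⟩
      by_contra hxS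
      have h1 := hm ⟨hx.1, hxS⟩
      have h2 := hx.2
      simp only [Set.mem_Iio, not_lt] at h2
      omega
    have hinf := Nat.sInf_mem hne
    exact hinf ⟨hmem n, by simp only [Set.mem_Iio, not_lt]; omega⟩
  obtain ⟨N, hN⟩ := eventually_atTop.mp key
  constructor
  · apply Set.Finite.subset ((Set.finite_Iio N).image π₀)
    rintro x ⟨⟨n, hna, rfl⟩, hxb⟩
    refine ⟨n, ?_, rfl⟩
    simp only [Set.mem_Iio]
    by_contra h
    push_neg at h
    have := hN n h
    rw [hS n α, if_pos hna] at this
    exact hxb this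
  · apply Set.Finite.subset ((Set.finite_Iio N).image π₀)
    rintro x ⟨⟨n, hna, rfl⟩, hxb⟩
    refine ⟨n, ?_, rfl⟩
    simp only [Set.mem_Iio]
    by_contra h
    push_neg at h
    have := hN n h
    rw [hS n α, if_neg hna] at this
    rw [Set.notMem_compl_iff] at hxb
    exact this hxb
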